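/- The set of normalized averages {avd(G)/n : G a finite simple graph on n ≥ 1 vertices} is dense in the interval [1/2, 1]; that is, for every x ∈ [1/2, 1] and every ε > 0 there exists a finite simple graph G on some number n of vertices with |avd(G)/n − x| < ε. -/

import Mathlib

open Finset

/-- `S` is a dominating set of `G`: every vertex is in `S` or adjacent to a vertex of `S`. -/
def SimpleGraph.IsDomSet {V : Type*} (G : SimpleGraph V) (S : Finset V) : Prop :=
  ∀ v : V, v ∈ S ∨ ∃ u ∈ S, G.Adj u v

/-- The family of all dominating sets of `G`. -/
noncomputable def SimpleGraph.domSets {V : Type*} [Fintype V] (G : SimpleGraph V) :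
    Finset (Finset V) :=
  @Finset.filter _ (fun S => G.IsDomSet S) (Classical.decPred _) Finset.univ

/-- The average order (cardinality) of a dominating set of `G`. -/
noncomputable def SimpleGraph.avd {V : Type*} [Fintype V] (G : SimpleGraph V) : ℝ :=
  (∑ S ∈ G.domSets, (S.card : ℝ)) / (G.domSets).card
/-- clique on first A vertices, rest isolated -/
def cliqueIso (A N : ℕ) : SimpleGraph (Fin N) where
  Adj u v := u ≠ v ∧ u.val < A ∧ v.val < A
  symm := by constructor; intro u v ⟨h1, h2, h3⟩; exact ⟨h1.symm, h3, h2⟩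
  loopless := by constructor; intro v h; exact h.1 rfl

variable {A N : ℕ}

/-- first A vertices -/
def FF (A N : ℕ) : Finset (Fin N) := {v : Fin N | v.val < A}

lemma mem_FF {v : Fin N} : v ∈ FF A N ↔ v.val < A := by simp [FF]

lemma card_FF (hAN : A ≤ N) : (FF A N).card = A := by
  have : FF A N = Finset.attachFin (Finset.range A)
      (fun m hm => lt_of_lt_of_le (Finset.mem_range.mp hm) hAN) := by
    ext v; simp [mem_FF, Finset.mem_attachFin]
  rw [this, Finset.card_attachFin, Finset.card_range]

lemma card_FFc (hAN : A ≤ N) : ((FF A N)ᶜ).card = N - A := by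
  rw [Finset.card_compl, card_FF hAN, Fintype.card_fin]

lemma isDomSet_iff (hA : 1 ≤ A) (hAN : A ≤ N) (S : Finset (Fin N)) :
    (cliqueIso A N).IsDomSet S ↔ (S ∩ FF A N).Nonempty ∧ (FF A N)ᶜ ⊆ S := by
  constructor
  · intro h
    constructor
    · have hv : (⟨0, lt_of_lt_of_le hA hAN⟩ : Fin N) ∈ FF A N := by
        simp [mem_FF]; omega
      rcases h ⟨0, lt_of_lt_of_le hA hAN⟩ with hm | ⟨u, hu, hadj⟩
      · exact ⟨_, Finset.mem_inter.mpr ⟨hm, hv⟩⟩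
      · exact ⟨u, Finset.mem_inter.mpr ⟨hu, mem_FF.mpr hadj.2.1⟩⟩
    · intro v hv
      rcases h v with hm | ⟨u, hu, hadj⟩
      · exact hm
      · exact absurd (mem_FF.mpr hadj.2.2) (Finset.mem_compl.mp hv)
  · rintro ⟨⟨u, hu⟩, hsub⟩ v
    rw [Finset.mem_inter, mem_FF] at hu
    by_cases hv : v.val < A
    · by_cases hev : v ∈ S
      · exact Or.inl hev
      · refine Or.inr ⟨u, hu.1, ?_, hu.2, hv⟩
        rintro rfl; exact hev hu.1
    · exact Or.inl (hsub (Finset.mem_compl.mpr (by simpa [mem_FF] using hv)))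

lemma domSets_eq (hA : 1 ≤ A) (hAN : A ≤ N) :
    (cliqueIso A N).domSets =
      ((FF A N).powerset.filter (fun s => s.Nonempty)).image (fun s => s ∪ (FF A N)ᶜ) := by
  ext S
  simp only [SimpleGraph.domSets, Finset.mem_filter, Finset.mem_univ, true_and,
    Finset.mem_image, Finset.mem_powerset, isDomSet_iff hA hAN]
  constructor
  · rintro ⟨hne, hsub⟩
    refine ⟨S ∩ FF A N, ⟨Finset.inter_subset_right, hne⟩, ?_⟩
    ext v
    simp only [Finset.mem_union, Finset.mem_inter, Finset.mem_compl]
    constructor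
    · rintro (⟨h, _⟩ | h)
      · exact h
      · exact hsub (Finset.mem_compl.mpr h)
    · intro hv
      by_cases hf : v ∈ FF A N
      · exact Or.inl ⟨hv, hf⟩
      · exact Or.inr hf
  · rintro ⟨s, ⟨hsub, hne⟩, rfl⟩
    constructor
    · obtain ⟨u, hu⟩ := hne
      exact ⟨u, Finset.mem_inter.mpr ⟨Finset.mem_union_left _ hu, hsub hu⟩⟩
    · exact Finset.subset_union_right

variable {A N : ℕ}

lemma filter_nonempty_eq : ((FF A N).powerset.filter (fun s => s.Nonempty)) =
    (FF A N).powerset.erase ∅ := by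
  ext s
  simp [Finset.mem_filter, Finset.mem_erase, Finset.nonempty_iff_ne_empty, and_comm]

lemma injOn_union : Set.InjOn (fun s => s ∪ (FF A N)ᶜ)
    ((FF A N).powerset.filter (fun s => s.Nonempty)) := by
  intro s hs t ht h
  simp only [Finset.coe_filter, Set.mem_setOf_eq, Finset.mem_powerset] at hs ht
  have key : ∀ u : Finset (Fin N), u ⊆ FF A N → (u ∪ (FF A N)ᶜ) ∩ FF A N = u := by
    intro u hu
    ext v
    simp only [Finset.mem_inter, Finset.mem_union, Finset.mem_compl]
    constructor
    · rintro ⟨h1 | h1, h2⟩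
      · exact h1
      · exact absurd h2 h1
    · intro hv; exact ⟨Or.inl hv, hu hv⟩
  simp only at h
  rw [← key s hs.1, ← key t ht.1, h]

lemma card_domSets (hA : 1 ≤ A) (hAN : A ≤ N) :
    ((cliqueIso A N).domSets).card = 2 ^ A - 1 := by
  rw [domSets_eq hA hAN, Finset.card_image_of_injOn injOn_union, filter_nonempty_eq,
    Finset.card_erase_of_mem (Finset.empty_mem_powerset _), Finset.card_powerset, card_FF hAN]

lemma sum_domSets (hA : 1 ≤ A) (hAN : A ≤ N) :
    ∑ S ∈ (cliqueIso A N).domSets, (S.card : ℝ) =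
      (A : ℝ) * 2 ^ A / 2 + (2 ^ A - 1) * (N - A) := by
  rw [domSets_eq hA hAN, Finset.sum_image injOn_union]
  have hcard : ∀ s ∈ (FF A N).powerset.filter (fun s => s.Nonempty),
      (((s ∪ (FF A N)ᶜ).card : ℝ)) = (s.card : ℝ) + (N - A : ℝ) := by
    intro s hs
    simp only [Finset.mem_filter, Finset.mem_powerset] at hs
    have hdisj : Disjoint s (FF A N)ᶜ :=
      Disjoint.mono_left hs.1 disjoint_compl_right
    rw [Finset.card_union_of_disjoint hdisj, card_FFc hAN, Nat.cast_add, Nat.cast_sub hAN]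
  rw [Finset.sum_congr rfl hcard, Finset.sum_add_distrib, Finset.sum_const,
    nsmul_eq_mul]
  have h1 : ∑ s ∈ (FF A N).powerset.filter (fun s => s.Nonempty), (s.card : ℝ)
      = ∑ s ∈ (FF A N).powerset, (s.card : ℝ) := by
    rw [filter_nonempty_eq, Finset.sum_erase _ (by simp)]
  have h2 : ∑ s ∈ (FF A N).powerset, (s.card : ℝ) = (FF A N).card * 2 ^ (FF A N).card / 2 := by
    -- from t1
    have h1' : ∑ S ∈ (FF A N).powerset, (S.card : ℝ)
        = ∑ S ∈ (FF A N).powerset, (((FF A N) \ S).card : ℝ) := by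
      apply Finset.sum_nbij' (fun S => (FF A N) \ S) (fun S => (FF A N) \ S) <;>
        simp +contextual [Finset.mem_powerset, sdiff_sdiff_right_self,
          Finset.inf_eq_inter, Finset.inter_eq_right]
    have h2' : (2:ℝ) * ∑ S ∈ (FF A N).powerset, (S.card : ℝ)
        = (FF A N).card * 2 ^ (FF A N).card := by
      rw [two_mul]
      nth_rewrite 2 [h1']
      rw [← Finset.sum_add_distrib]
      have h3 : ∀ S ∈ (FF A N).powerset,
          ((S.card : ℝ) + (((FF A N) \ S).card : ℝ)) = ((FF A N).card : ℝ) := by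
        intro S hS
        rw [Finset.mem_powerset] at hS
        rw [← Nat.cast_add, add_comm, Finset.card_sdiff_add_card_eq_card hS]
      rw [Finset.sum_congr rfl h3, Finset.sum_const, Finset.card_powerset, nsmul_eq_mul]
      push_cast; ring
    linarith
  have hc : ((((FF A N).powerset.filter (fun s => s.Nonempty)).card : ℝ)) = 2 ^ A - 1 := by
    rw [filter_nonempty_eq, Finset.card_erase_of_mem (Finset.empty_mem_powerset _),
      Finset.card_powerset, card_FF hAN]
    have : (1:ℕ) ≤ 2 ^ A := Nat.one_le_two_pow
    push_cast [this]
    ring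
  rw [h1, h2, card_FF hAN, hc]

lemma avd_cliqueIso (hA : 1 ≤ A) (hAN : A ≤ N) :
    (cliqueIso A N).avd = ((N : ℝ) - A) + (A : ℝ) * 2 ^ A / (2 * (2 ^ A - 1)) := by
  have hpow : (1:ℝ) < 2 ^ A := by
    calc (1:ℝ) < 2 ^ 1 := by norm_num
    _ ≤ 2 ^ A := by
      apply pow_le_pow_right₀ (by norm_num) hA
  have hne : (2:ℝ) ^ A - 1 ≠ 0 := by linarith
  rw [SimpleGraph.avd, sum_domSets hA hAN, card_domSets hA hAN]
  have hc : (((2:ℕ) ^ A - 1 : ℕ) : ℝ) = 2 ^ A - 1 := by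
    push_cast [Nat.one_le_two_pow]; ring
  rw [hc]
  field_simp
  ring

/-- The set of normalized averages `avd(G)/n` over finite simple graphs `G` on
`n ≥ 1` vertices is dense in `[1/2, 1]`. -/
theorem normalized_avd_dense :
    ∀ x ∈ Set.Icc ((1 : ℝ) / 2) 1, ∀ ε > (0 : ℝ),
      ∃ (n : ℕ) (_ : 1 ≤ n) (G : SimpleGraph (Fin n)),
        |G.avd / (n : ℝ) - x| < ε := by
  intro x hx ε hε
  obtain ⟨hx1, hx2⟩ := hx
  set τ : ℝ := 2 * (1 - x) with hτdef
  have hτ0 : 0 ≤ τ := by simp only [hτdef]; linarith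
  have hτ1 : τ ≤ 1 := by simp only [hτdef]; linarith
  -- choose q
  obtain ⟨q, hq⟩ := exists_nat_gt (2 / ε)
  have hq0R : (0:ℝ) < q := lt_trans (by positivity) hq
  have hq0 : 0 < q := by exact_mod_cast hq0R
  have hqε : 2 < ε * q := by
    rw [div_lt_iff₀ hε] at hq
    linarith
  -- choose k
  set k := max 1 (Nat.ceil (τ * q)) with hkdef
  have hk1 : 1 ≤ k := le_max_left _ _
  have hkq : k ≤ q := by
    apply max_le hq0
    rw [Nat.ceil_le]
    calc τ * q ≤ 1 * q := by apply mul_le_mul_of_nonneg_right hτ1 hq0R.le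
    _ = q := one_mul _
  have hkub : (k:ℝ) ≤ τ * q + 1 := by
    have : (k:ℝ) = max 1 ((Nat.ceil (τ * q) : ℕ) : ℝ) := by
      rw [hkdef]; push_cast; rfl
    rw [this]
    apply max_le
    · have := mul_nonneg hτ0 hq0R.le; linarith
    · have := Nat.ceil_lt_add_one (mul_nonneg hτ0 hq0R.le)
      linarith
  have hklb : τ * q ≤ (k:ℝ) := by
    refine le_trans (Nat.le_ceil _) ?_
    exact_mod_cast le_max_right 1 (Nat.ceil (τ * q))
  -- choose m
  obtain ⟨m0, hm0⟩ := pow_unbounded_of_one_lt (2/ε + 1) (one_lt_two (α := ℝ))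
  set m := max m0 1 with hmdef
  have hm1 : 1 ≤ m := le_max_right _ _
  have hm : 2/ε + 1 < 2 ^ m := by
    refine lt_of_lt_of_le hm0 ?_
    exact pow_le_pow_right₀ one_le_two (le_max_left _ _)
  -- set up
  set A := k * m with hAdef
  set N := q * m with hNdef
  have hA : 1 ≤ A := Nat.one_le_iff_ne_zero.mpr (by positivity)
  have hAN : A ≤ N := Nat.mul_le_mul_right m hkq
  have hN : 1 ≤ N := le_trans hA hAN
  refine ⟨N, hN, cliqueIso A N, ?_⟩
  have hNR : (0:ℝ) < N := by exact_mod_cast hN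
  have hmR : (0:ℝ) < m := by exact_mod_cast hm1
  set P : ℝ := 2 ^ A with hPdef
  have hP2 : (2:ℝ) ≤ P := by
    rw [hPdef]
    calc (2:ℝ) = 2 ^ 1 := (pow_one 2).symm
    _ ≤ 2 ^ A := pow_le_pow_right₀ one_le_two hA
  have hPm : (2:ℝ) ^ m ≤ P := by
    rw [hPdef]
    exact pow_le_pow_right₀ one_le_two (le_trans (Nat.le_mul_of_pos_left m hk1) le_rfl)
  have hPε : 2 / ε < P - 1 := by linarith
  have hP1 : (0:ℝ) < P - 1 := by linarith
  set t : ℝ := (k:ℝ) / q with htdef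
  have ht0 : 0 ≤ t := by positivity
  have ht1 : t ≤ 1 := by
    rw [htdef, div_le_one hq0R]; exact_mod_cast hkq
  have htlb : τ ≤ t := by
    rw [htdef, le_div_iff₀ hq0R]; linarith
  have htub : t ≤ τ + 1 / q := by
    rw [htdef, div_le_iff₀ hq0R]
    have : (τ + 1 / q) * q = τ * q + 1 := by field_simp
    rw [this]; exact hkub
  -- the key identity
  have hD : (cliqueIso A N).avd / (N:ℝ) - x = (τ - t) / 2 + t / (2 * (P - 1)) := by
    rw [avd_cliqueIso hA hAN]
    have hxτ : x = 1 - τ / 2 := by rw [hτdef]; ring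
    have hNc : (N:ℝ) = (q:ℝ) * m := by rw [hNdef]; push_cast; ring
    have hAc : (A:ℝ) = (k:ℝ) * m := by rw [hAdef]; push_cast; ring
    rw [hxτ, hNc, hAc, htdef, ← hPdef]
    field_simp
    ring
  clear_value t P N A m k τ
  rw [hD]
  -- bounds
  have hub : (τ - t) / 2 + t / (2 * (P - 1)) ≤ 1 / (2 * (P - 1)) := by
    have h1 : (τ - t) / 2 ≤ 0 := by linarith
    have h2 : t / (2 * (P - 1)) ≤ 1 / (2 * (P - 1)) := by
      apply div_le_div_of_nonneg_right ht1 (by linarith) |>.trans_eq rfl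
    linarith
  have hPε' : 2 < ε * (P - 1) := by
    rw [div_lt_iff₀ hε] at hPε; linarith
  have hub2 : 1 / (2 * (P - 1)) < ε / 2 := by
    rw [div_lt_div_iff₀ (by linarith) (by norm_num)]
    nlinarith [hPε']
  have hlb : -(1 / (2 * (q:ℝ))) ≤ (τ - t) / 2 + t / (2 * (P - 1)) := by
    have h1 : -(1 / (q:ℝ)) ≤ τ - t := by linarith
    have h2 : 0 ≤ t / (2 * (P - 1)) := by positivity
    have he : 1 / (2 * (q:ℝ)) = (1 / (q:ℝ)) / 2 := by ring
    have h3 : -(1 / (2 * (q:ℝ))) ≤ (τ - t) / 2 := by rw [he]; linarith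
    linarith
  have h2q : (0:ℝ) < 2 * (q:ℝ) := by linarith
  have hlb2 : -(ε) < -(1 / (2 * (q:ℝ))) := by
    rw [neg_lt_neg_iff, div_lt_iff₀ h2q]
    have he2 : ε * (2 * (q:ℝ)) = 2 * (ε * q) := by ring
    rw [he2]
    linarith
  rw [abs_lt]
  constructor
  · linarith
  · linarith
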